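/- arXiv:2505.01382 — 4 statements merged into one kernel-verified Lean document; each statement's English description precedes it below -/
import Mathlib

section
/- The reciprocal classifier probability is a martingale along the forward diffusion: for 0 ≤ τ ≤ t < 1, p_{c|X_t}(c|x)^{-1} = E[ p_{c|X_τ}(c|X_τ)^{-1} | X_t = x ], where the conditional law of X_τ given X_t = x and class c is given by Bayes' rule with the Gaussian transition kernel p_{X_t|X_τ}(x|x_τ) = (2πσ²)^{-d/2} exp(-‖x - α x_τ‖²/(2σ²)), with α = √((1-t)/(1-τ)) and σ² = (t-τ)/(1-τ). -/
open MeasureTheory Real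

/-- The reciprocal classifier probability is a martingale along the forward diffusion.
Here `pτ, pτc` are the (marginal resp. class-conditional) densities of `X_τ`,
`pt, ptc` those of `X_t`, related by the Gaussian transition kernel with scaling
`α = √((1-t)/(1-τ))` and variance `σ² = (t-τ)/(1-τ)`; `pc` is the prior class probability.
The conditional density of `X_τ` given `X_t = x` and class `c` is
`x_τ ↦ pτc x_τ · K x x_τ / ptc x` (Bayes' rule with the class-independent kernel), and the
claim is `p_{c|X_t}(c|x)⁻¹ = E[p_{c|X_τ}(c|X_τ)⁻¹ | X_t = x, c]`. -/
theorem reciprocal_classifier_martingale (d : ℕ) (τ t : ℝ) (hτ : 0 ≤ τ) (hτt : τ ≤ t)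
    (ht : t < 1)
    (pτ pτc pt ptc : EuclideanSpace ℝ (Fin d) → ℝ) (pc : ℝ)
    (K : EuclideanSpace ℝ (Fin d) → EuclideanSpace ℝ (Fin d) → ℝ)
    (hK : ∀ x xτ, K x xτ =
      (2 * π * ((t - τ) / (1 - τ))) ^ (-(d : ℝ) / 2) *
        Real.exp (-‖x - Real.sqrt ((1 - t) / (1 - τ)) • xτ‖ ^ 2 / (2 * ((t - τ) / (1 - τ)))))
    (hpt : ∀ x, pt x = ∫ xτ, pτ xτ * K x xτ)
    (hptc : ∀ x, ptc x = ∫ xτ, pτc xτ * K x xτ)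
    (hpτ : ∀ x, 0 < pτ x) (hpτc : ∀ x, 0 < pτc x)
    (hpt' : ∀ x, 0 < pt x) (hptc' : ∀ x, 0 < ptc x) (hpc : 0 < pc)
    (x : EuclideanSpace ℝ (Fin d)) :
    (ptc x * pc / pt x)⁻¹ =
      ∫ xτ, (pτc xτ * K x xτ / ptc x) * (pτc xτ * pc / pτ xτ)⁻¹ := by
  have h : ∀ xτ, (pτc xτ * K x xτ / ptc x) * (pτc xτ * pc / pτ xτ)⁻¹
      = pτ xτ * K x xτ * (ptc x * pc)⁻¹ := by
    intro xτ
    have h1 := (hpτ xτ).ne'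
    have h2 := (hpτc xτ).ne'
    have h3 := (hptc' x).ne'
    have h4 := hpc.ne'
    field_simp
  simp only [h]
  rw [integral_mul_const, ← hpt x]
  field_simp
end

section
/- Suppose P(‖X_0‖ < R | c) > 1/2. Then the conditional density of X_{1-t} given class c satisfies p_{X_{1-t}|c}(y|c) ≥ (1/2)(2π(1-t))^{-d/2} exp(-(‖y‖ + √t R)²/(2(1-t))) for all y ∈ ℝ^d and 0 ≤ t < 1. -/
open MeasureTheory Real

/-- If `P(‖X_0‖ < R | c) > 1/2`, then the class-conditional density of
`X_{1-t} | X_0 ~ N(√t·X_0, (1-t)·I)` satisfies the lower bound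
`p_{X_{1-t}|c}(y|c) ≥ (1/2)(2π(1-t))^{-d/2} exp(-(‖y‖+√t R)²/(2(1-t)))`. -/
theorem conditional_density_lower_bound (d : ℕ) (t R : ℝ) (ht0 : 0 ≤ t) (ht1 : t < 1)
    (hR : 0 < R) (p0c : EuclideanSpace ℝ (Fin d) → ℝ)
    (hnn : ∀ x, 0 ≤ p0c x) (hint : Integrable p0c)
    (htail : 1 / 2 < ∫ x in {x : EuclideanSpace ℝ (Fin d) | ‖x‖ < R}, p0c x)
    (y : EuclideanSpace ℝ (Fin d)) :
    (1 / 2) * (2 * π * (1 - t)) ^ (-(d : ℝ) / 2) *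
        Real.exp (-(‖y‖ + Real.sqrt t * R) ^ 2 / (2 * (1 - t)))
      ≤ ∫ x, p0c x * ((2 * π * (1 - t)) ^ (-(d : ℝ) / 2) *
          Real.exp (-‖y - Real.sqrt t • x‖ ^ 2 / (2 * (1 - t)))) := by
  have h1t : (0:ℝ) < 1 - t := by linarith
  set C : ℝ := (2 * π * (1 - t)) ^ (-(d : ℝ) / 2) with hC
  have hCpos : 0 < C := Real.rpow_pos_of_pos (by positivity) _
  set E : ℝ := Real.exp (-(‖y‖ + Real.sqrt t * R) ^ 2 / (2 * (1 - t))) with hE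
  have hEpos : 0 < E := Real.exp_pos _
  set g : EuclideanSpace ℝ (Fin d) → ℝ :=
    fun x => C * Real.exp (-‖y - Real.sqrt t • x‖ ^ 2 / (2 * (1 - t))) with hg
  have hgcont : Continuous g := by
    apply continuous_const.mul
    apply Real.continuous_exp.comp
    fun_prop
  have hgbd : ∀ x, ‖g x‖ ≤ C := by
    intro x
    rw [Real.norm_eq_abs,
      abs_of_nonneg (mul_nonneg hCpos.le (Real.exp_pos _).le)]
    have h1 : Real.exp (-‖y - Real.sqrt t • x‖ ^ 2 / (2 * (1 - t))) ≤ 1 := by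
      rw [Real.exp_le_one_iff]
      apply div_nonpos_of_nonpos_of_nonneg (neg_nonpos.mpr (by positivity)) (by positivity)
    show C * _ ≤ C
    nlinarith [hCpos, Real.exp_pos (-‖y - Real.sqrt t • x‖ ^ 2 / (2 * (1 - t)))]
  have hfint : Integrable (fun x => p0c x * g x) := by
    have := hint.bdd_mul hgcont.aestronglyMeasurable (Filter.Eventually.of_forall hgbd)
    simpa [mul_comm] using this
  set S : Set (EuclideanSpace ℝ (Fin d)) := {x | ‖x‖ < R} with hSdef
  have hS : MeasurableSet S := (isOpen_lt continuous_norm continuous_const).measurableSet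
  have hnng : ∀ x, 0 ≤ p0c x * g x := fun x => mul_nonneg (hnn x) (mul_nonneg hCpos.le (Real.exp_pos _).le)
  have step1 : ∫ x in S, p0c x * g x ≤ ∫ x, p0c x * g x :=
    setIntegral_le_integral hfint (Filter.Eventually.of_forall hnng)
  have step2 : ∫ x in S, p0c x * (C * E) ≤ ∫ x in S, p0c x * g x := by
    apply setIntegral_mono_on ((hint.restrict).mul_const _) (hfint.restrict) hS
    intro x hx
    apply mul_le_mul_of_nonneg_left _ (hnn x)
    apply mul_le_mul_of_nonneg_left _ hCpos.le
    rw [Real.exp_le_exp]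
    have hnorm : ‖y - Real.sqrt t • x‖ ≤ ‖y‖ + Real.sqrt t * R := by
      calc ‖y - Real.sqrt t • x‖ ≤ ‖y‖ + ‖Real.sqrt t • x‖ := norm_sub_le _ _
        _ = ‖y‖ + Real.sqrt t * ‖x‖ := by
            rw [norm_smul, Real.norm_eq_abs, abs_of_nonneg (Real.sqrt_nonneg t)]
        _ ≤ ‖y‖ + Real.sqrt t * R := by
            have : ‖x‖ ≤ R := le_of_lt hx
            nlinarith [Real.sqrt_nonneg t, norm_nonneg x]
    have hsq : ‖y - Real.sqrt t • x‖ ^ 2 ≤ (‖y‖ + Real.sqrt t * R) ^ 2 := by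
      nlinarith [norm_nonneg (y - Real.sqrt t • x)]
    have : -(‖y‖ + Real.sqrt t * R) ^ 2 ≤ -‖y - Real.sqrt t • x‖ ^ 2 := by linarith
    exact div_le_div_of_nonneg_right this (by positivity) |>.trans_eq rfl
  have step3 : (1/2) * (C * E) ≤ ∫ x in S, p0c x * (C * E) := by
    rw [MeasureTheory.integral_mul_const]
    have hCE : 0 < C * E := by positivity
    nlinarith [htail]
  calc (1 / 2) * C * E = (1/2) * (C * E) := by ring
    _ ≤ ∫ x in S, p0c x * (C * E) := step3
    _ ≤ ∫ x in S, p0c x * g x := step2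
    _ ≤ ∫ x, p0c x * g x := step1
end

section
/- Under the conditions P(‖X_0‖ < R | c) > 1/2 and p_c(c) > 0, the reciprocal classifier probability satisfies p_{c|X_{1-t}}(c|y)^{-1} ≤ 2 p_c(c)^{-1} exp((‖y‖ + √t R)²/(2(1-t))) for all y ∈ ℝ^d and 0 ≤ t < 1. -/
open MeasureTheory Real

/-- If `P(‖X_0‖ < R | c) > 1/2` and `p_c(c) > 0`, then the reciprocal classifier
probability `p_{c|X_{1-t}}(c|y)⁻¹ = p_{X_{1-t}}(y) / (p_c(c) · p_{X_{1-t}|c}(y|c))`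
satisfies `p_{c|X_{1-t}}(c|y)⁻¹ ≤ 2 p_c(c)⁻¹ exp((‖y‖+√t R)²/(2(1-t)))`. -/
theorem reciprocal_classifier_upper_bound (d : ℕ) (t R pc : ℝ) (ht0 : 0 ≤ t) (ht1 : t < 1)
    (hR : 0 < R) (hpc : 0 < pc)
    (p0 p0c pt ptc : EuclideanSpace ℝ (Fin d) → ℝ)
    (hnn : ∀ x, 0 ≤ p0 x) (hint : Integrable p0) (hmass : ∫ x, p0 x = 1)
    (hnnc : ∀ x, 0 ≤ p0c x) (hintc : Integrable p0c)
    (htail : 1 / 2 < ∫ x in {x : EuclideanSpace ℝ (Fin d) | ‖x‖ < R}, p0c x)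
    (hpt : ∀ y, pt y = ∫ x, p0 x * ((2 * π * (1 - t)) ^ (-(d : ℝ) / 2) *
        Real.exp (-‖y - Real.sqrt t • x‖ ^ 2 / (2 * (1 - t)))))
    (hptc : ∀ y, ptc y = ∫ x, p0c x * ((2 * π * (1 - t)) ^ (-(d : ℝ) / 2) *
        Real.exp (-‖y - Real.sqrt t • x‖ ^ 2 / (2 * (1 - t)))))
    (y : EuclideanSpace ℝ (Fin d)) :
    (pc * ptc y / pt y)⁻¹ ≤
      2 * pc⁻¹ * Real.exp ((‖y‖ + Real.sqrt t * R) ^ 2 / (2 * (1 - t))) := by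
  have h1t : (0:ℝ) < 1 - t := by linarith
  set C : ℝ := (2 * π * (1 - t)) ^ (-(d : ℝ) / 2) with hC
  have hCpos : 0 < C := by
    apply Real.rpow_pos_of_pos
    positivity
  set A : ℝ := (‖y‖ + Real.sqrt t * R) ^ 2 / (2 * (1 - t)) with hA
  set g : EuclideanSpace ℝ (Fin d) → ℝ :=
    fun x => Real.exp (-‖y - Real.sqrt t • x‖ ^ 2 / (2 * (1 - t))) with hg
  have hcont : Continuous g := by
    apply Real.continuous_exp.comp
    exact (((continuous_const.sub (continuous_const_smul _)).norm.pow 2).neg).div_const _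
  have hexple : ∀ x, g x ≤ 1 := by
    intro x
    apply Real.exp_le_one_iff.mpr
    apply div_nonpos_of_nonpos_of_nonneg
    · simp [sq_nonneg]
    · positivity
  have hexppos : ∀ x, 0 < g x := fun x => Real.exp_pos _
  have hbd : ∀ (p : EuclideanSpace ℝ (Fin d) → ℝ), (∀ x, 0 ≤ p x) →
      ∀ x, p x * (C * g x) ≤ C * p x := by
    intro p hp x
    calc p x * (C * g x) ≤ p x * (C * 1) :=
          mul_le_mul_of_nonneg_left (mul_le_mul_of_nonneg_left (hexple x) hCpos.le) (hp x)
      _ = C * p x := by ring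
  have hbdnn : ∀ (p : EuclideanSpace ℝ (Fin d) → ℝ), (∀ x, 0 ≤ p x) →
      ∀ x, 0 ≤ p x * (C * g x) := by
    intro p hp x
    exact mul_nonneg (hp x) (mul_nonneg hCpos.le (hexppos x).le)
  have hintgen : ∀ (p : EuclideanSpace ℝ (Fin d) → ℝ), (∀ x, 0 ≤ p x) → Integrable p →
      Integrable (fun x => p x * (C * g x)) := by
    intro p hp hip
    refine (hip.const_mul C).mono'
      (hip.aestronglyMeasurable.mul ((continuous_const.mul hcont).aestronglyMeasurable)) ?_
    filter_upwards with x
    rw [Real.norm_eq_abs, abs_of_nonneg (hbdnn p hp x)]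
    exact hbd p hp x
  have hfi := hintgen p0 hnn hint
  have hgi := hintgen p0c hnnc hintc
  have hptle : pt y ≤ C := by
    rw [hpt y]
    calc (∫ x, p0 x * (C * g x)) ≤ ∫ x, C * p0 x :=
          integral_mono hfi (hint.const_mul C) (hbd p0 hnn)
      _ = C := by rw [integral_const_mul, hmass, mul_one]
  have hSmeas : MeasurableSet {x : EuclideanSpace ℝ (Fin d) | ‖x‖ < R} :=
    (isOpen_lt continuous_norm continuous_const).measurableSet
  have hptcge : C * Real.exp (-A) / 2 ≤ ptc y := by
    rw [hptc y]
    have hstep1 : ∫ x in {x : EuclideanSpace ℝ (Fin d) | ‖x‖ < R}, p0c x * (C * Real.exp (-A)) ≤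
        ∫ x in {x : EuclideanSpace ℝ (Fin d) | ‖x‖ < R}, p0c x * (C * g x) := by
      apply setIntegral_mono_on ((hintc.const_mul (C * Real.exp (-A))).integrableOn.congr ?_)
        hgi.integrableOn hSmeas
      · intro x hx
        apply mul_le_mul_of_nonneg_left _ (hnnc x)
        apply mul_le_mul_of_nonneg_left _ hCpos.le
        apply Real.exp_le_exp.mpr
        rw [hA, neg_div, neg_le_neg_iff, div_le_div_iff_of_pos_right (by positivity)]
        have hxR : ‖x‖ ≤ R := le_of_lt hx
        have hnb : ‖y - Real.sqrt t • x‖ ≤ ‖y‖ + Real.sqrt t * R := by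
          calc ‖y - Real.sqrt t • x‖ ≤ ‖y‖ + ‖Real.sqrt t • x‖ := norm_sub_le _ _
            _ = ‖y‖ + Real.sqrt t * ‖x‖ := by
                rw [norm_smul, Real.norm_eq_abs, abs_of_nonneg (Real.sqrt_nonneg t)]
            _ ≤ ‖y‖ + Real.sqrt t * R := by
                have := mul_le_mul_of_nonneg_left hxR (Real.sqrt_nonneg t)
                linarith
        have h0 : 0 ≤ ‖y - Real.sqrt t • x‖ := norm_nonneg _
        nlinarith
      · filter_upwards with x
        ring
    have hstep2 : ∫ x in {x : EuclideanSpace ℝ (Fin d) | ‖x‖ < R}, p0c x * (C * g x) ≤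
        ∫ x, p0c x * (C * g x) := by
      apply setIntegral_le_integral hgi
      filter_upwards with x using hbdnn p0c hnnc x
    have hstep0 : C * Real.exp (-A) / 2 ≤
        ∫ x in {x : EuclideanSpace ℝ (Fin d) | ‖x‖ < R}, p0c x * (C * Real.exp (-A)) := by
      rw [show (fun x : EuclideanSpace ℝ (Fin d) => p0c x * (C * Real.exp (-A))) =
            fun x : EuclideanSpace ℝ (Fin d) => (C * Real.exp (-A)) * p0c x from by
              funext x; ring,
          integral_const_mul]
      have hpos : (0:ℝ) < C * Real.exp (-A) := by positivity
      calc C * Real.exp (-A) / 2 = C * Real.exp (-A) * (1/2) := by ring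
        _ ≤ C * Real.exp (-A) * ∫ x in {x : EuclideanSpace ℝ (Fin d) | ‖x‖ < R}, p0c x :=
            mul_le_mul_of_nonneg_left htail.le hpos.le
    linarith
  have hdenpos : 0 < pc * (C * Real.exp (-A) / 2) := by positivity
  have hre : C / (pc * (C * Real.exp (-A) / 2)) = 2 * pc⁻¹ * Real.exp A := by
    rw [Real.exp_neg]
    field_simp
  rw [inv_div]
  calc pt y / (pc * ptc y) ≤ C / (pc * (C * Real.exp (-A) / 2)) := by
        apply div_le_div₀ hCpos.le hptle hdenpos
        exact mul_le_mul_of_nonneg_left hptcge hpc.le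
    _ = 2 * pc⁻¹ * Real.exp A := hre
end

section
/- Suppose P(‖X_0‖ < R) > 1/2. Then there is a universal constant C such that for all 0 ≤ t < 1 and y ∈ ℝ^d, ‖∇ log p_{X_{1-t}}(y)‖₂ ≤ C·((‖y‖ + √t R)/(1-t) + d/√(1-t)). -/
open MeasureTheory Real

lemma sexp_le (σ2 s : ℝ) (hσ : 0 < σ2) (hs : 0 ≤ s) :
    s * Real.exp (-s ^ 2 / (2 * σ2)) ≤ 2 * Real.sqrt σ2 := by
  have hσpos : 0 < Real.sqrt σ2 := Real.sqrt_pos.mpr hσ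
  have hσsq : Real.sqrt σ2 ^ 2 = σ2 := Real.sq_sqrt hσ.le
  rcases le_or_gt s (2 * Real.sqrt σ2) with h | h
  · have h1 : Real.exp (-s ^ 2 / (2 * σ2)) ≤ 1 := by
      apply Real.exp_le_one_iff.mpr
      apply div_nonpos_of_nonpos_of_nonneg <;> nlinarith
    nlinarith [Real.exp_pos (-s ^ 2 / (2 * σ2))]
  · have hs0 : 0 < s := lt_of_le_of_lt (by positivity) h
    have hx : (0:ℝ) < s ^ 2 / (2 * σ2) := by positivity
    have hinv : Real.exp (-s ^ 2 / (2 * σ2)) * s ^ 2 ≤ 2 * σ2 := by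
      rw [neg_div, Real.exp_neg]
      have h1 : s ^ 2 / (2 * σ2) ≤ Real.exp (s ^ 2 / (2 * σ2)) := by
        linarith [Real.add_one_le_exp (s ^ 2 / (2 * σ2))]
      have h2 : (0:ℝ) < Real.exp (s ^ 2 / (2 * σ2)) := Real.exp_pos _
      rw [inv_mul_le_iff₀ h2]
      calc s ^ 2 = s ^ 2 / (2 * σ2) * (2 * σ2) := by field_simp
      _ ≤ Real.exp (s ^ 2 / (2 * σ2)) * (2 * σ2) := by
          apply mul_le_mul_of_nonneg_right h1; positivity
    have he : (0:ℝ) ≤ Real.exp (-s ^ 2 / (2 * σ2)) := (Real.exp_pos _).le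
    nlinarith [mul_nonneg he hs]

lemma key_ineq (σ2 M u : ℝ) (hσ : 0 < σ2) (hM : 0 ≤ M) (hu : 0 ≤ u) :
    u * Real.exp (-u ^ 2 / (2 * σ2)) ≤
      (M + 2 * Real.sqrt σ2) *
        (Real.exp (-u ^ 2 / (2 * σ2)) + Real.exp (-M ^ 2 / (2 * σ2))) := by
  have hσpos : 0 < Real.sqrt σ2 := Real.sqrt_pos.mpr hσ
  have e1 := Real.exp_pos (-u ^ 2 / (2 * σ2))
  have e2 := Real.exp_pos (-M ^ 2 / (2 * σ2))
  rcases le_or_gt u (M + 2 * Real.sqrt σ2) with h | h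
  · nlinarith
  · have hMu : M ≤ u := by nlinarith
    have hc : (0:ℝ) < 2 * σ2 := by linarith
    have h1 : Real.exp (-u ^ 2 / (2 * σ2)) ≤
        Real.exp (-M ^ 2 / (2 * σ2)) * Real.exp (-(u - M) ^ 2 / (2 * σ2)) := by
      rw [← Real.exp_add]
      apply Real.exp_le_exp.mpr
      rw [← add_div, div_le_div_iff₀ hc hc]
      nlinarith [mul_nonneg (mul_nonneg hM (sub_nonneg.mpr hMu)) hσ.le]
    have h2 : (u - M) * Real.exp (-(u - M) ^ 2 / (2 * σ2)) ≤ 2 * Real.sqrt σ2 :=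
      sexp_le σ2 (u - M) hσ (by linarith)
    have h3 : Real.exp (-(u - M) ^ 2 / (2 * σ2)) ≤ 1 := by
      apply Real.exp_le_one_iff.mpr
      apply div_nonpos_of_nonpos_of_nonneg <;> nlinarith
    have e3 := Real.exp_pos (-(u - M) ^ 2 / (2 * σ2))
    have h4 : u * Real.exp (-(u - M) ^ 2 / (2 * σ2)) ≤ M + 2 * Real.sqrt σ2 := by
      nlinarith [mul_le_mul_of_nonneg_left h3 hM]
    calc u * Real.exp (-u ^ 2 / (2 * σ2))
        ≤ u * (Real.exp (-M ^ 2 / (2 * σ2)) * Real.exp (-(u - M) ^ 2 / (2 * σ2))) :=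
          mul_le_mul_of_nonneg_left h1 hu
      _ = (u * Real.exp (-(u - M) ^ 2 / (2 * σ2))) * Real.exp (-M ^ 2 / (2 * σ2)) := by ring
      _ ≤ (M + 2 * Real.sqrt σ2) * Real.exp (-M ^ 2 / (2 * σ2)) :=
          mul_le_mul_of_nonneg_right h4 e2.le
      _ ≤ (M + 2 * Real.sqrt σ2) *
          (Real.exp (-u ^ 2 / (2 * σ2)) + Real.exp (-M ^ 2 / (2 * σ2))) := by
          nlinarith

set_option maxHeartbeats 1000000 in
/-- If `P(‖X_0‖ < R) > 1/2`, there is a universal constant `C` such that for all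
`0 ≤ t < 1` and `y`, the score (written as the posterior mean
`-E[(y-√t X_0)/(1-t) | X_{1-t}=y]`) of the noised density satisfies
`‖∇ log p_{X_{1-t}}(y)‖ ≤ C((‖y‖+√t R)/(1-t) + d/√(1-t))`. -/
theorem score_norm_bound :
    ∃ C : ℝ, 0 < C ∧
      ∀ (d : ℕ) (R : ℝ) (p0 : EuclideanSpace ℝ (Fin d) → ℝ),
        0 < R →
        (∀ x, 0 ≤ p0 x) → Integrable p0 → (∫ x, p0 x) = 1 →
        (1 / 2 < ∫ x in {x : EuclideanSpace ℝ (Fin d) | ‖x‖ < R}, p0 x) →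
        ∀ (t : ℝ), 0 ≤ t → t < 1 →
        ∀ y : EuclideanSpace ℝ (Fin d),
          ‖-∫ x, ((p0 x * ((2 * π * (1 - t)) ^ (-(d : ℝ) / 2) *
                Real.exp (-‖y - Real.sqrt t • x‖ ^ 2 / (2 * (1 - t))))) /
              (∫ x', p0 x' * ((2 * π * (1 - t)) ^ (-(d : ℝ) / 2) *
                Real.exp (-‖y - Real.sqrt t • x'‖ ^ 2 / (2 * (1 - t)))))) •
              ((1 - t)⁻¹ • (y - Real.sqrt t • x))‖
            ≤ C * ((‖y‖ + Real.sqrt t * R) / (1 - t) + d / Real.sqrt (1 - t)) := by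
  refine ⟨6, by norm_num, ?_⟩
  intro d R p0 hR hp0 hint hpint hball t ht ht1 y
  have hσ2 : (0:ℝ) < 1 - t := by linarith
  have hσpos : 0 < Real.sqrt (1 - t) := Real.sqrt_pos.mpr hσ2
  have hσsq : Real.sqrt (1 - t) ^ 2 = 1 - t := Real.sq_sqrt hσ2.le
  have hM : (0:ℝ) ≤ ‖y‖ + Real.sqrt t * R :=
    add_nonneg (norm_nonneg _) (mul_nonneg (Real.sqrt_nonneg _) hR.le)
  have hRHS0 : (0:ℝ) ≤ 6 * ((‖y‖ + Real.sqrt t * R) / (1 - t) + d / Real.sqrt (1 - t)) := by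
    apply mul_nonneg (by norm_num)
    exact add_nonneg (div_nonneg hM hσ2.le) (div_nonneg (Nat.cast_nonneg d) hσpos.le)
  rcases Nat.eq_zero_or_pos d with hd | hd
  · subst hd
    haveI : Subsingleton (EuclideanSpace ℝ (Fin 0)) := inferInstance
    have hz : ∀ v : EuclideanSpace ℝ (Fin 0), ‖v‖ = 0 := fun v => by
      rw [Subsingleton.elim v 0, norm_zero]
    rw [hz]
    exact_mod_cast hRHS0
  -- main case
  set M := ‖y‖ + Real.sqrt t * R with hMdef
  set c := (2 * π * (1 - t)) ^ (-(d : ℝ) / 2) with hcdef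
  have hcpos : 0 < c := by
    apply Real.rpow_pos_of_pos
    have : (0:ℝ) < 2 * π := by positivity
    exact mul_pos this hσ2
  set g : EuclideanSpace ℝ (Fin d) → ℝ :=
    fun x => c * Real.exp (-‖y - Real.sqrt t • x‖ ^ 2 / (2 * (1 - t))) with hgdef
  set Z := ∫ x', p0 x' * g x' with hZdef
  have hgpos : ∀ x, 0 < g x := fun x => mul_pos hcpos (Real.exp_pos _)
  have hgle : ∀ x, g x ≤ c := by
    intro x
    have : Real.exp (-‖y - Real.sqrt t • x‖ ^ 2 / (2 * (1 - t))) ≤ 1 := by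
      apply Real.exp_le_one_iff.mpr
      apply div_nonpos_of_nonpos_of_nonneg
      · simp [neg_nonpos, sq_nonneg]
      · linarith
    calc g x = c * Real.exp _ := rfl
      _ ≤ c * 1 := mul_le_mul_of_nonneg_left this hcpos.le
      _ = c := mul_one c
  have hgcont : Continuous g := by
    apply Continuous.mul continuous_const
    apply Real.continuous_exp.comp
    apply Continuous.div_const
    apply Continuous.neg
    fun_prop
  have hGint : Integrable (fun x => p0 x * g x) := by
    have := hint.bdd_mul (hgcont.aestronglyMeasurable)
      (ae_of_all _ fun x => by rw [Real.norm_eq_abs, abs_of_nonneg (hgpos x).le]; exact hgle x)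
    simpa [mul_comm] using this
  set eM := Real.exp (-M ^ 2 / (2 * (1 - t))) with heMdef
  have heMpos : 0 < eM := Real.exp_pos _
  -- lower bound on Z
  have hBmeas : MeasurableSet {x : EuclideanSpace ℝ (Fin d) | ‖x‖ < R} :=
    (isOpen_lt continuous_norm continuous_const).measurableSet
  have hbound : ∀ x ∈ {x : EuclideanSpace ℝ (Fin d) | ‖x‖ < R},
      c * eM * p0 x ≤ p0 x * g x := by
    intro x hx
    have hux : ‖y - Real.sqrt t • x‖ ≤ M := by
      calc ‖y - Real.sqrt t • x‖ ≤ ‖y‖ + ‖Real.sqrt t • x‖ := norm_sub_le _ _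
        _ = ‖y‖ + Real.sqrt t * ‖x‖ := by
            rw [norm_smul, Real.norm_eq_abs, abs_of_nonneg (Real.sqrt_nonneg _)]
        _ ≤ ‖y‖ + Real.sqrt t * R := by
            have := mul_le_mul_of_nonneg_left (le_of_lt hx) (Real.sqrt_nonneg t)
            linarith
    have hee : eM ≤ Real.exp (-‖y - Real.sqrt t • x‖ ^ 2 / (2 * (1 - t))) := by
      apply Real.exp_le_exp.mpr
      have h5 : ‖y - Real.sqrt t • x‖ ^ 2 ≤ M ^ 2 := by
        nlinarith [norm_nonneg (y - Real.sqrt t • x)]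
      rw [div_le_div_iff₀ (by linarith) (by linarith)]
      nlinarith [h5, hσ2]
    have := mul_le_mul_of_nonneg_left hee (mul_nonneg hcpos.le (hp0 x))
    calc c * eM * p0 x = c * p0 x * eM := by ring
      _ ≤ c * p0 x * Real.exp (-‖y - Real.sqrt t • x‖ ^ 2 / (2 * (1 - t))) := this
      _ = p0 x * g x := by rw [hgdef]; ring
  have hZlow : c * eM * (1 / 2) < Z := by
    have step1 : c * eM * (1 / 2) < c * eM *
        (∫ x in {x : EuclideanSpace ℝ (Fin d) | ‖x‖ < R}, p0 x) := by
      apply mul_lt_mul_of_pos_left hball (mul_pos hcpos heMpos)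
    have step2 : c * eM * (∫ x in {x : EuclideanSpace ℝ (Fin d) | ‖x‖ < R}, p0 x)
        ≤ ∫ x in {x : EuclideanSpace ℝ (Fin d) | ‖x‖ < R}, p0 x * g x := by
      rw [← integral_const_mul]
      exact setIntegral_mono_on ((hint.const_mul _).integrableOn) (hGint.integrableOn)
        hBmeas hbound
    have step3 : (∫ x in {x : EuclideanSpace ℝ (Fin d) | ‖x‖ < R}, p0 x * g x) ≤ Z :=
      setIntegral_le_integral hGint (ae_of_all _ fun x => mul_nonneg (hp0 x) (hgpos x).le)
    linarith
  have hZpos : 0 < Z := lt_trans (by positivity) hZlow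
  have hZkey : c * eM ≤ 2 * Z := by linarith
  -- pointwise bound
  set σ := Real.sqrt (1 - t) with hσdef
  set H : EuclideanSpace ℝ (Fin d) → ℝ :=
    fun x => (M + 2 * σ) / (Z * (1 - t)) * (p0 x * g x + c * eM * p0 x) with hHdef
  have hHint : Integrable H :=
    ((hGint.add (hint.const_mul (c * eM))).const_mul _)
  have hpt : ∀ x, ‖((p0 x * g x) / Z) • ((1 - t)⁻¹ • (y - Real.sqrt t • x))‖ ≤ H x := by
    intro x
    have hG0 : 0 ≤ p0 x * g x := mul_nonneg (hp0 x) (hgpos x).le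
    rw [norm_smul, norm_smul, Real.norm_eq_abs, Real.norm_eq_abs,
      abs_of_nonneg (div_nonneg hG0 hZpos.le), abs_of_nonneg (inv_nonneg.mpr hσ2.le)]
    have hkey2 : (p0 x * g x) * ‖y - Real.sqrt t • x‖ ≤
        (M + 2 * σ) * (p0 x * g x + c * eM * p0 x) := by
      have hk := key_ineq (1 - t) M ‖y - Real.sqrt t • x‖ hσ2 hM (norm_nonneg _)
      have := mul_le_mul_of_nonneg_left hk (mul_nonneg (hp0 x) hcpos.le)
      calc (p0 x * g x) * ‖y - Real.sqrt t • x‖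
          = p0 x * c * (‖y - Real.sqrt t • x‖ *
              Real.exp (-‖y - Real.sqrt t • x‖ ^ 2 / (2 * (1 - t)))) := by
            rw [hgdef]; ring
        _ ≤ p0 x * c * ((M + 2 * σ) *
              (Real.exp (-‖y - Real.sqrt t • x‖ ^ 2 / (2 * (1 - t))) + eM)) := this
        _ = (M + 2 * σ) * (p0 x * g x + c * eM * p0 x) := by rw [hgdef]; ring
    have hZt : 0 < Z * (1 - t) := mul_pos hZpos hσ2
    have lhs_eq : (p0 x * g x) / Z * ((1 - t)⁻¹ * ‖y - Real.sqrt t • x‖)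
        = ((p0 x * g x) * ‖y - Real.sqrt t • x‖) / (Z * (1 - t)) := by
      field_simp
    rw [lhs_eq]
    simp only [hHdef]
    rw [div_mul_eq_mul_div, div_le_div_iff₀ hZt hZt]
    exact mul_le_mul_of_nonneg_right hkey2 hZt.le
  -- combine
  rw [norm_neg]
  have hd1 : (1:ℝ) ≤ d := by exact_mod_cast hd
  calc ‖∫ x, ((p0 x * g x) / Z) • ((1 - t)⁻¹ • (y - Real.sqrt t • x))‖
      ≤ ∫ x, ‖((p0 x * g x) / Z) • ((1 - t)⁻¹ • (y - Real.sqrt t • x))‖ :=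
        norm_integral_le_integral_norm _
    _ ≤ ∫ x, H x := integral_mono_of_nonneg (ae_of_all _ fun x => norm_nonneg _) hHint
        (ae_of_all _ hpt)
    _ = (M + 2 * σ) / (Z * (1 - t)) * (Z + c * eM) := by
        rw [hHdef]
        rw [integral_const_mul, integral_add hGint (hint.const_mul (c * eM)),
          integral_const_mul, hpint, mul_one, ← hZdef]
    _ ≤ (M + 2 * σ) / (Z * (1 - t)) * (3 * Z) := by
        apply mul_le_mul_of_nonneg_left (by linarith)
        apply div_nonneg (by positivity) (mul_pos hZpos hσ2).le
    _ = 3 * (M + 2 * σ) / (1 - t) := by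
        field_simp
    _ ≤ 6 * (M / (1 - t) + d / σ) := by
        have hσinv : σ / (1 - t) = 1 / σ := by
          rw [← hσsq]; rw [sq]; field_simp
        have e1 : 3 * (M + 2 * σ) / (1 - t) = 3 * (M / (1 - t)) + 6 * (σ / (1 - t)) := by
          ring
        rw [e1, hσinv]
        have h2 : 6 * (1 / σ) ≤ 6 * ((d:ℝ) / σ) := by
          apply mul_le_mul_of_nonneg_left _ (by norm_num)
          exact (div_le_div_iff_of_pos_right hσpos).mpr hd1
        have h3 : 3 * (M / (1 - t)) ≤ 6 * (M / (1 - t)) := by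
          have : 0 ≤ M / (1 - t) := div_nonneg hM hσ2.le
          linarith
        linarith
end
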